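/- If ν has density α x^{-2α-1} exp(−x^{-α}) on (0,∞) (the α-stable law in the Kendall algebra), then G(t) = H(t) = e^{-t^{-α}} and the Kendall renewal function is R(t) = (e^{t^{-α}} − 1 + t^{-α} e^{t^{-α}})/(e^{t^{-α}} − 1)². -/

import Mathlib

open MeasureTheory Real Filter Set Topology NNReal ENNReal

namespace KendallStableAux

variable {α : ℝ}

/-- derivative of `exp (-(x ^ (-α)))`. -/
lemma hd1 (hα : 0 < α) {x : ℝ} (hx : 0 < x) :
    HasDerivAt (fun y : ℝ => Real.exp (-(y ^ (-α))))
      (α * x ^ (-α - 1) * Real.exp (-(x ^ (-α)))) x := by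
  have h := (Real.hasDerivAt_rpow_const (x := x) (p := -α) (Or.inl hx.ne')).neg
  have h2 := (Real.hasDerivAt_exp (-(x ^ (-α)))).comp x h
  refine h2.congr_deriv ?_
  ring

/-- derivative of `(x ^ (-α) + 1) * exp (-(x ^ (-α)))`. -/
lemma hd2 (hα : 0 < α) {x : ℝ} (hx : 0 < x) :
    HasDerivAt (fun y : ℝ => (y ^ (-α) + 1) * Real.exp (-(y ^ (-α))))
      (α * x ^ (-(2 * α) - 1) * Real.exp (-(x ^ (-α)))) x := by
  have hr := Real.hasDerivAt_rpow_const (x := x) (p := -α) (Or.inl hx.ne')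
  have h := (hr.add_const 1).mul (hd1 hα hx)
  refine h.congr_deriv ?_
  have key : x ^ (-(2 * α) - 1) = x ^ (-α) * x ^ (-α - 1) := by
    rw [← Real.rpow_add hx]; ring_nf
  rw [key]; ring

lemma tendsto_rpow_zero (hα : 0 < α) :
    Tendsto (fun x : ℝ => x ^ (-α)) (𝓝[>] (0 : ℝ)) atTop := by
  have h1 : Tendsto (fun x : ℝ => x ^ α) (𝓝[>] (0 : ℝ)) (𝓝[>] 0) := by
    rw [tendsto_nhdsWithin_iff]
    constructor
    · have := (Real.continuousAt_rpow_const 0 α (Or.inr hα.le)).tendsto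
      simpa [Real.zero_rpow hα.ne'] using this.mono_left (nhdsWithin_le_nhds)
    · filter_upwards [self_mem_nhdsWithin] with x hx
      exact Real.rpow_pos_of_pos hx α
  refine h1.inv_tendsto_nhdsGT_zero.congr' ?_
  filter_upwards [self_mem_nhdsWithin] with x (hx : (0:ℝ) < x)
  simp [Pi.inv_apply, ← Real.rpow_neg hx.le]

lemma tendsto_g1_zero (hα : 0 < α) :
    Tendsto (fun x : ℝ => Real.exp (-(x ^ (-α)))) (𝓝[>] (0 : ℝ)) (𝓝 0) := by
  have := Real.tendsto_exp_atBot.comp (tendsto_neg_atTop_atBot.comp (tendsto_rpow_zero hα))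
  simpa [Function.comp_def] using this

lemma tendsto_g2_zero (hα : 0 < α) :
    Tendsto (fun x : ℝ => (x ^ (-α) + 1) * Real.exp (-(x ^ (-α)))) (𝓝[>] (0 : ℝ)) (𝓝 0) := by
  have h : Tendsto (fun u : ℝ => (u + 1) * Real.exp (-u)) atTop (𝓝 0) := by
    have h1 := Real.tendsto_pow_mul_exp_neg_atTop_nhds_zero 1
    have h2 : Tendsto (fun u : ℝ => Real.exp (-u)) atTop (𝓝 0) :=
      Real.tendsto_exp_atBot.comp tendsto_neg_atTop_atBot
    have := h1.add h2
    simp only [pow_one] at this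
    convert this using 2 with u
    · ring
    · norm_num
  have := h.comp (tendsto_rpow_zero hα)
  simpa [Function.comp_def] using this

lemma tendsto_g1_top (hα : 0 < α) :
    Tendsto (fun x : ℝ => Real.exp (-(x ^ (-α)))) atTop (𝓝 1) := by
  have hn := (tendsto_rpow_neg_atTop hα).neg
  rw [neg_zero] at hn
  have := (Real.continuous_exp.tendsto 0).comp hn
  simpa [Function.comp_def] using this

lemma tendsto_g2_top (hα : 0 < α) :
    Tendsto (fun x : ℝ => (x ^ (-α) + 1) * Real.exp (-(x ^ (-α)))) atTop (𝓝 1) := by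
  have := ((tendsto_rpow_neg_atTop hα).add_const 1).mul (tendsto_g1_top hα)
  simpa using this

end KendallStableAux

namespace KendallStableAux

lemma int_f1_Ioi_zero (hα : 0 < α) :
    IntegrableOn (fun x : ℝ => α * x ^ (-α - 1) * Real.exp (-(x ^ (-α)))) (Ioi (0:ℝ)) ∧
      ∫ x in Ioi (0:ℝ), α * x ^ (-α - 1) * Real.exp (-(x ^ (-α))) = 1 := by
  set g : ℝ → ℝ := fun x => if x = 0 then 0 else Real.exp (-(x ^ (-α))) with hg
  have hg0 : g 0 = 0 := if_pos rfl
  have hcont : ContinuousWithinAt g (Ici (0:ℝ)) 0 := by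
    rw [ContinuousWithinAt, hg0, ← Set.Ioi_insert, Set.insert_eq, nhdsWithin_union]
    rw [tendsto_sup]
    constructor
    · rw [nhdsWithin_singleton]
      simpa [hg0] using tendsto_pure_nhds g 0
    · refine (tendsto_g1_zero hα).congr' ?_
      filter_upwards [self_mem_nhdsWithin] with x (hx : (0:ℝ) < x)
      simp [hg, hx.ne']
  have hderiv : ∀ x ∈ Ioi (0:ℝ), HasDerivAt g (α * x ^ (-α - 1) * Real.exp (-(x ^ (-α)))) x := by
    intro x hx
    refine (hd1 hα hx).congr_of_eventuallyEq ?_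
    filter_upwards [Ioi_mem_nhds (show (0:ℝ) < x from hx)] with y (hy : (0:ℝ) < y)
    simp [hg, hy.ne']
  have hpos : ∀ x ∈ Ioi (0:ℝ), 0 ≤ α * x ^ (-α - 1) * Real.exp (-(x ^ (-α))) := fun x hx =>
    mul_nonneg (mul_nonneg hα.le (Real.rpow_nonneg (le_of_lt hx) _)) (Real.exp_pos _).le
  have htop : Tendsto g atTop (𝓝 1) := by
    refine (tendsto_g1_top hα).congr' ?_
    filter_upwards [eventually_gt_atTop (0:ℝ)] with x hx
    simp [hg, hx.ne']
  exact ⟨integrableOn_Ioi_deriv_of_nonneg hcont hderiv hpos htop,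
    by simpa [hg0] using integral_Ioi_of_hasDerivAt_of_nonneg hcont hderiv hpos htop⟩

lemma int_f2_Ioi_zero (hα : 0 < α) :
    IntegrableOn (fun x : ℝ => α * x ^ (-(2 * α) - 1) * Real.exp (-(x ^ (-α)))) (Ioi (0:ℝ)) ∧
      ∫ x in Ioi (0:ℝ), α * x ^ (-(2 * α) - 1) * Real.exp (-(x ^ (-α))) = 1 := by
  set g : ℝ → ℝ := fun x => if x = 0 then 0 else (x ^ (-α) + 1) * Real.exp (-(x ^ (-α))) with hg
  have hg0 : g 0 = 0 := if_pos rfl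
  have hcont : ContinuousWithinAt g (Ici (0:ℝ)) 0 := by
    rw [ContinuousWithinAt, hg0, ← Set.Ioi_insert, Set.insert_eq, nhdsWithin_union]
    rw [tendsto_sup]
    constructor
    · rw [nhdsWithin_singleton]
      simpa [hg0] using tendsto_pure_nhds g 0
    · refine (tendsto_g2_zero hα).congr' ?_
      filter_upwards [self_mem_nhdsWithin] with x (hx : (0:ℝ) < x)
      simp [hg, hx.ne']
  have hderiv : ∀ x ∈ Ioi (0:ℝ), HasDerivAt g (α * x ^ (-(2 * α) - 1) * Real.exp (-(x ^ (-α)))) x := by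
    intro x hx
    refine (hd2 hα hx).congr_of_eventuallyEq ?_
    filter_upwards [Ioi_mem_nhds (show (0:ℝ) < x from hx)] with y (hy : (0:ℝ) < y)
    simp [hg, hy.ne']
  have hpos : ∀ x ∈ Ioi (0:ℝ), 0 ≤ α * x ^ (-(2 * α) - 1) * Real.exp (-(x ^ (-α))) := fun x hx =>
    mul_nonneg (mul_nonneg hα.le (Real.rpow_nonneg (le_of_lt hx) _)) (Real.exp_pos _).le
  have htop : Tendsto g atTop (𝓝 1) := by
    refine (tendsto_g2_top hα).congr' ?_
    filter_upwards [eventually_gt_atTop (0:ℝ)] with x hx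
    simp [hg, hx.ne']
  exact ⟨integrableOn_Ioi_deriv_of_nonneg hcont hderiv hpos htop,
    by simpa [hg0] using integral_Ioi_of_hasDerivAt_of_nonneg hcont hderiv hpos htop⟩

lemma int_f1_Ioi (hα : 0 < α) {t : ℝ} (ht : 0 < t) :
    ∫ x in Ioi t, α * x ^ (-α - 1) * Real.exp (-(x ^ (-α))) = 1 - Real.exp (-(t ^ (-α))) := by
  have hderiv : ∀ x ∈ Ioi t, HasDerivAt (fun y : ℝ => Real.exp (-(y ^ (-α))))
      (α * x ^ (-α - 1) * Real.exp (-(x ^ (-α)))) x := fun x hx => hd1 hα (ht.trans hx)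
  have hpos : ∀ x ∈ Ioi t, 0 ≤ α * x ^ (-α - 1) * Real.exp (-(x ^ (-α))) := fun x hx =>
    mul_nonneg (mul_nonneg hα.le (Real.rpow_nonneg (ht.trans hx).le _)) (Real.exp_pos _).le
  exact integral_Ioi_of_hasDerivAt_of_nonneg
    (hd1 hα ht).continuousAt.continuousWithinAt hderiv hpos (tendsto_g1_top hα)

lemma int_f2_Ioi (hα : 0 < α) {t : ℝ} (ht : 0 < t) :
    ∫ x in Ioi t, α * x ^ (-(2 * α) - 1) * Real.exp (-(x ^ (-α)))
      = 1 - (t ^ (-α) + 1) * Real.exp (-(t ^ (-α))) := by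
  have hderiv : ∀ x ∈ Ioi t, HasDerivAt (fun y : ℝ => (y ^ (-α) + 1) * Real.exp (-(y ^ (-α))))
      (α * x ^ (-(2 * α) - 1) * Real.exp (-(x ^ (-α)))) x := fun x hx => hd2 hα (ht.trans hx)
  have hpos : ∀ x ∈ Ioi t, 0 ≤ α * x ^ (-(2 * α) - 1) * Real.exp (-(x ^ (-α))) := fun x hx =>
    mul_nonneg (mul_nonneg hα.le (Real.rpow_nonneg (ht.trans hx).le _)) (Real.exp_pos _).le
  exact integral_Ioi_of_hasDerivAt_of_nonneg
    (hd2 hα ht).continuousAt.continuousWithinAt hderiv hpos (tendsto_g2_top hα)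

lemma int_f1_Ioc (hα : 0 < α) {t : ℝ} (ht : 0 < t) :
    ∫ x in Ioc 0 t, α * x ^ (-α - 1) * Real.exp (-(x ^ (-α))) = Real.exp (-(t ^ (-α))) := by
  obtain ⟨hint, hval⟩ := int_f1_Ioi_zero (α := α) hα
  have hIoc : IntegrableOn (fun x : ℝ => α * x ^ (-α - 1) * Real.exp (-(x ^ (-α)))) (Ioc 0 t) :=
    hint.mono_set Set.Ioc_subset_Ioi_self
  have hIoi : IntegrableOn (fun x : ℝ => α * x ^ (-α - 1) * Real.exp (-(x ^ (-α)))) (Ioi t) :=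
    hint.mono_set (Set.Ioi_subset_Ioi ht.le)
  have hsplit := setIntegral_union (Set.Ioc_disjoint_Ioi le_rfl) measurableSet_Ioi hIoc hIoi
  rw [Set.Ioc_union_Ioi_eq_Ioi ht.le] at hsplit
  rw [hval, int_f1_Ioi hα ht] at hsplit
  linarith

lemma int_f2_Ioc (hα : 0 < α) {t : ℝ} (ht : 0 < t) :
    ∫ x in Ioc 0 t, α * x ^ (-(2 * α) - 1) * Real.exp (-(x ^ (-α)))
      = (t ^ (-α) + 1) * Real.exp (-(t ^ (-α))) := by
  obtain ⟨hint, hval⟩ := int_f2_Ioi_zero (α := α) hα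
  have hIoc : IntegrableOn (fun x : ℝ => α * x ^ (-(2 * α) - 1) * Real.exp (-(x ^ (-α)))) (Ioc 0 t) :=
    hint.mono_set Set.Ioc_subset_Ioi_self
  have hIoi : IntegrableOn (fun x : ℝ => α * x ^ (-(2 * α) - 1) * Real.exp (-(x ^ (-α)))) (Ioi t) :=
    hint.mono_set (Set.Ioi_subset_Ioi ht.le)
  have hsplit := setIntegral_union (Set.Ioc_disjoint_Ioi le_rfl) measurableSet_Ioi hIoc hIoi
  rw [Set.Ioc_union_Ioi_eq_Ioi ht.le] at hsplit
  rw [hval, int_f2_Ioi hα ht] at hsplit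
  linarith

end KendallStableAux

open KendallStableAux

/-- Kendall renewal function for the α-stable unit step distribution in the
Kendall algebra, with density `α x^(-2α-1) exp(-x^(-α))` on `(0,∞)`. -/
theorem kendall_renewal_stable
    (α : ℝ) (hα : 0 < α)
    (ν : Measure ℝ)
    (hν : ν = volume.withDensity
      (fun x => ENNReal.ofReal
        (if 0 < x then α * x ^ (-(2 * α) - 1) * Real.exp (-(x ^ (-α))) else 0)))
    (G H R : ℝ → ℝ)
    (hG : ∀ t, G t = ∫ x, max (1 - x ^ α / t ^ α) 0 ∂ν)
    (hH : ∀ t, H t = ∫ x in Set.Ioc 0 t, x ^ α ∂ν)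
    (hR : ∀ t, R t = G t / (1 - G t) + H t / (t ^ α * (1 - G t) ^ 2)) :
    ∀ t : ℝ, 0 < t →
      G t = Real.exp (-(t ^ (-α))) ∧
      H t = Real.exp (-(t ^ (-α))) ∧
      R t = (Real.exp (t ^ (-α)) - 1 + t ^ (-α) * Real.exp (t ^ (-α))) /
            (Real.exp (t ^ (-α)) - 1) ^ 2 := by
  intro t ht
  set d : ℝ → ℝ := fun x => if 0 < x then α * x ^ (-(2 * α) - 1) * Real.exp (-(x ^ (-α))) else 0
    with hd_def
  have hd_nonneg : ∀ x, 0 ≤ d x := by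
    intro x
    rw [hd_def]
    dsimp only
    split
    · exact mul_nonneg (mul_nonneg hα.le (Real.rpow_nonneg (by assumption : (0:ℝ) < x).le _))
        (Real.exp_pos _).le
    · exact le_rfl
  have hd_meas : Measurable d := by
    rw [hd_def]
    apply Measurable.ite measurableSet_Ioi
    · fun_prop
    · exact measurable_const
  have hm : Measurable fun x => (d x).toNNReal := measurable_real_toNNReal.comp hd_meas
  have hν' : ν = volume.withDensity fun x => (((d x).toNNReal : ℝ≥0) : ℝ≥0∞) := hν
  -- pointwise facts
  have hptα : 0 < t ^ α := Real.rpow_pos_of_pos ht _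
  have hx1 : ∀ x : ℝ, 0 < x → x ^ (-(2 * α) - 1) * x ^ α = x ^ (-α - 1) := by
    intro x hx
    rw [← Real.rpow_add hx]
    ring_nf
  have htinv : t ^ (-α) = (t ^ α)⁻¹ := Real.rpow_neg ht.le α
  -- G
  have hGt : G t = Real.exp (-(t ^ (-α))) := by
    rw [hG t, hν', integral_withDensity_eq_integral_smul hm]
    rw [← setIntegral_eq_integral_of_forall_compl_eq_zero
      (s := Ioc (0:ℝ) t) (f := fun x => (d x).toNNReal • max (1 - x ^ α / t ^ α) 0) ?_]
    · rw [setIntegral_congr_fun measurableSet_Ioc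
        (g := fun x => α * x ^ (-(2 * α) - 1) * Real.exp (-(x ^ (-α)))
          - t ^ (-α) * (α * x ^ (-α - 1) * Real.exp (-(x ^ (-α))))) ?_]
      · rw [integral_sub ((int_f2_Ioi_zero hα).1.mono_set Set.Ioc_subset_Ioi_self)
          (((int_f1_Ioi_zero hα).1.mono_set Set.Ioc_subset_Ioi_self).const_mul _),
          integral_const_mul, int_f1_Ioc hα ht, int_f2_Ioc hα ht]
        ring
      · intro x hx
        have hx0 : (0:ℝ) < x := hx.1
        have hmax : max (1 - x ^ α / t ^ α) 0 = 1 - x ^ α / t ^ α := by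
          apply max_eq_left
          rw [sub_nonneg, div_le_one hptα]
          exact Real.rpow_le_rpow hx0.le hx.2 hα.le
        dsimp only
        rw [hmax, NNReal.smul_def, Real.coe_toNNReal _ (hd_nonneg x), hd_def]
        dsimp only
        rw [if_pos hx0, htinv, ← hx1 x hx0]
        field_simp [hptα.ne']
        ring_nf
        field_simp [hptα.ne']
        ring
    · intro x hx
      by_cases hx0 : 0 < x
      · have hxt : t < x := by
          by_contra h
          exact hx ⟨hx0, not_lt.1 h⟩
        have hmax : max (1 - x ^ α / t ^ α) 0 = 0 := by
          apply max_eq_right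
          rw [sub_nonpos, le_div_iff₀ hptα, one_mul]
          exact Real.rpow_le_rpow ht.le hxt.le hα.le
        rw [hmax, smul_zero]
      · have : d x = 0 := by rw [hd_def]; exact if_neg hx0
        simp [this]
  -- H
  have hHt : H t = Real.exp (-(t ^ (-α))) := by
    rw [hH t, hν', setIntegral_withDensity_eq_setIntegral_smul hm _ measurableSet_Ioc]
    rw [setIntegral_congr_fun measurableSet_Ioc
      (g := fun x => α * x ^ (-α - 1) * Real.exp (-(x ^ (-α)))) ?_]
    · exact int_f1_Ioc hα ht
    · intro x hx
      have hx0 : (0:ℝ) < x := hx.1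
      dsimp only
      rw [NNReal.smul_def, Real.coe_toNNReal _ (hd_nonneg x), hd_def]
      dsimp only
      rw [if_pos hx0, smul_eq_mul]
      rw [show α * x ^ (-(2 * α) - 1) * Real.exp (-(x ^ (-α))) * x ^ α
          = α * (x ^ (-(2 * α) - 1) * x ^ α) * Real.exp (-(x ^ (-α))) from by ring, hx1 x hx0]
  -- R
  refine ⟨hGt, hHt, ?_⟩
  have hT : 0 < t ^ (-α) := Real.rpow_pos_of_pos ht _
  have hE : Real.exp (t ^ (-α)) = (Real.exp (-(t ^ (-α))))⁻¹ := by
    rw [← Real.exp_neg, neg_neg]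
  have hEpos : 0 < Real.exp (-(t ^ (-α))) := Real.exp_pos _
  have hE1 : Real.exp (-(t ^ (-α))) < 1 := by
    have := Real.exp_lt_exp.2 (neg_lt_zero.2 hT)
    simpa using this
  have htα : t ^ α = (t ^ (-α))⁻¹ := by rw [htinv, inv_inv]
  rw [hR t, hGt, hHt, hE, htα]
  have h1 : 1 - Real.exp (-(t ^ (-α))) ≠ 0 := by linarith
  have h2 : (Real.exp (-(t ^ (-α))))⁻¹ - 1 ≠ 0 := by
    have : 1 < (Real.exp (-(t ^ (-α))))⁻¹ := (one_lt_inv₀ hEpos).2 hE1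
    linarith
  field_simp
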